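/- The function x ↦ γ(|x|) σ(x), where γ : [0,1] → (0,∞) is Lipschitz and σ(x) = I - (1-√(1-|x|²)) x xᵀ/|x|² (σ(0)=I), is locally Lipschitz on the open unit ball {x ∈ R^n : |x| < 1} but σ is not Lipschitz on the closed unit ball B^n when n ≥ 1. -/

import Mathlib

/-- Square-root is Lipschitz away from zero. -/
lemma aux_sqrt_lip {c u v : ℝ} (hc : 0 < c) (hu : c ≤ u) (hv : c ≤ v) :
    |Real.sqrt u - Real.sqrt v| ≤ |u - v| / (2 * Real.sqrt c) := by
  have hcs : 0 < Real.sqrt c := Real.sqrt_pos.mpr hc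
  have hpu : Real.sqrt c ≤ Real.sqrt u := Real.sqrt_le_sqrt hu
  have hpv : Real.sqrt c ≤ Real.sqrt v := Real.sqrt_le_sqrt hv
  have h2u : Real.sqrt u ^ 2 = u := Real.sq_sqrt (by linarith)
  have h2v : Real.sqrt v ^ 2 = v := Real.sq_sqrt (by linarith)
  rw [le_div_iff₀ (by positivity)]
  rcases abs_cases (Real.sqrt u - Real.sqrt v) with ⟨h1, _⟩ | ⟨h1, _⟩ <;>
    rcases abs_cases (u - v) with ⟨h2, _⟩ | ⟨h2, _⟩ <;>
    rw [h1, h2] <;> nlinarith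

set_option maxHeartbeats 1000000 in
theorem stmt8 (n : ℕ) (hn : 1 ≤ n) (γ : ℝ → ℝ) (K : NNReal)
    (hγ : LipschitzOnWith K γ (Set.Icc 0 1))
    (hγpos : ∀ t ∈ Set.Icc (0:ℝ) 1, 0 < γ t)
    (σ : (Fin n → ℝ) → (Fin n → Fin n → ℝ))
    (hσ : σ = fun x => (1 : Matrix (Fin n) (Fin n) ℝ) -
      (if 0 < ∑ i, x i ^ 2 then
        (1 - Real.sqrt (1 - ∑ i, x i ^ 2)) / (∑ i, x i ^ 2) else 0) •
        Matrix.vecMulVec x x)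
    (F : (Fin n → ℝ) → (Fin n → Fin n → ℝ))
    (hF : F = fun x => γ (Real.sqrt (∑ i, x i ^ 2)) • σ x) :
    (∀ x : Fin n → ℝ, ∑ i, x i ^ 2 < 1 → ∃ ε > (0:ℝ), ∃ K' : NNReal,
      LipschitzOnWith K' F (Metric.ball x ε ∩ {y | ∑ i, y i ^ 2 < 1})) ∧
    ¬ ∃ K' : NNReal, LipschitzOnWith K' σ {y : Fin n → ℝ | ∑ i, y i ^ 2 ≤ 1} := by
  have hσe : ∀ (x : Fin n → ℝ) (i j : Fin n), σ x i j =
      (if i = j then 1 else 0) -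
      (if 0 < ∑ k, x k ^ 2 then
        (1 - Real.sqrt (1 - ∑ k, x k ^ 2)) / (∑ k, x k ^ 2) else 0) * (x i * x j) := by
    intro x i j
    have h := congrFun (congrFun (congrFun hσ x) i) j
    rw [h]; rfl
  have hFe : ∀ (x : Fin n → ℝ) (i j : Fin n),
      F x i j = γ (Real.sqrt (∑ k, x k ^ 2)) * σ x i j := by
    intro x i j
    have h := congrFun (congrFun (congrFun hF x) i) j
    rw [Pi.smul_apply, Pi.smul_apply, smul_eq_mul] at h
    exact h
  have hq0 : ∀ y : Fin n → ℝ, 0 ≤ ∑ i, y i ^ 2 :=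
    fun y => Finset.sum_nonneg fun i _ => sq_nonneg _
  constructor
  · -- Part 1: local Lipschitzness of F on the open unit ball
    intro x0 hx0
    have hu0nn : 0 ≤ ∑ i, x0 i ^ 2 := hq0 x0
    set u0 : ℝ := ∑ i, x0 i ^ 2 with hu0def
    have hu01 : u0 < 1 := hx0
    set s : ℝ := (1 + u0) / 2 with hsdef
    have hs1 : s < 1 := by rw [hsdef]; linarith
    have hus : u0 < s := by rw [hsdef]; linarith
    have hs0 : 0 < s := by rw [hsdef]; linarith
    have hn' : (0:ℝ) < n := by exact_mod_cast hn
    set ε : ℝ := min 1 ((s - u0) / (3 * n)) with hεdef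
    have hε : 0 < ε := lt_min one_pos (div_pos (by linarith) (by positivity))
    have hε1 : ε ≤ 1 := min_le_left _ _
    have hε2 : 3 * n * ε ≤ s - u0 := by
      have h := min_le_right 1 ((s - u0) / (3 * n))
      calc 3 * n * ε ≤ 3 * n * ((s - u0) / (3 * n)) :=
            mul_le_mul_of_nonneg_left h (by positivity)
        _ = s - u0 := by field_simp
    refine ⟨ε, hε, ?_⟩
    set S : Set (Fin n → ℝ) := Metric.ball x0 ε ∩ {y | ∑ i, y i ^ 2 < 1} with hSdef
    -- basic bounds on S
    have hx0i : ∀ i, |x0 i| ≤ 1 := by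
      intro i
      have h1 : x0 i ^ 2 ≤ u0 := Finset.single_le_sum (f := fun i => x0 i ^ 2)
        (fun i _ => sq_nonneg _) (Finset.mem_univ i)
      nlinarith [sq_abs (x0 i), abs_nonneg (x0 i)]
    have hqS : ∀ y ∈ S, (∑ i, y i ^ 2) ≤ s := by
      rintro y ⟨hy1, _⟩
      have hd : dist y x0 < ε := Metric.mem_ball.mp hy1
      have hterm : ∀ i, y i ^ 2 ≤ x0 i ^ 2 + 3 * ε := by
        intro i
        have h1 : |y i - x0 i| ≤ dist y x0 := by
          rw [← Real.dist_eq]; exact dist_le_pi_dist y x0 i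
        have h2 : |y i - x0 i| ≤ ε := h1.trans hd.le
        have h3 := hx0i i
        have h4 := abs_le.mp h2
        have h5 := abs_le.mp h3
        nlinarith
      calc (∑ i, y i ^ 2) ≤ ∑ i, (x0 i ^ 2 + 3 * ε) := Finset.sum_le_sum fun i _ => hterm i
        _ = u0 + n * (3 * ε) := by
            rw [Finset.sum_add_distrib, Finset.sum_const, Finset.card_univ]
            simp [hu0def]
        _ ≤ u0 + (s - u0) := by nlinarith
        _ = s := by ring
    have hyi : ∀ y ∈ S, ∀ i, |y i| ≤ 1 := by
      intro y hy i
      have h1 : y i ^ 2 ≤ ∑ k, y k ^ 2 := Finset.single_le_sum (f := fun k => y k ^ 2)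
        (fun k _ => sq_nonneg _) (Finset.mem_univ i)
      have h2 := hqS y hy
      nlinarith [sq_abs (y i), abs_nonneg (y i)]
    -- the smooth representatives
    set a : (Fin n → ℝ) → ℝ := fun y => γ (Real.sqrt (∑ i, y i ^ 2)) with hadef
    set b : (Fin n → ℝ) → ℝ := fun y => 1 / (1 + Real.sqrt (1 - ∑ i, y i ^ 2)) with hbdef
    have hqIcc : ∀ y ∈ S, Real.sqrt (∑ i, y i ^ 2) ∈ Set.Icc (0:ℝ) 1 := by
      intro y hy
      exact ⟨Real.sqrt_nonneg _, Real.sqrt_le_one.mpr (by linarith [hqS y hy])⟩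
    have hbpos : ∀ y : Fin n → ℝ, 0 < 1 + Real.sqrt (1 - ∑ i, y i ^ 2) := by
      intro y
      have := Real.sqrt_nonneg (1 - ∑ i, y i ^ 2)
      linarith
    have hFS : ∀ y ∈ S, ∀ i j, F y i j =
        a y * ((if i = j then 1 else 0) - b y * (y i * y j)) := by
      rintro y hy i j
      have hy1 : (∑ k, y k ^ 2) < 1 := hy.2
      rw [hFe y i j, hσe y i j]
      have : a y = γ (Real.sqrt (∑ k, y k ^ 2)) := by rw [hadef]
      rw [this]
      congr 2
      by_cases h : 0 < ∑ k, y k ^ 2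
      · rw [if_pos h]
        have hp : Real.sqrt (1 - ∑ k, y k ^ 2) ^ 2 = 1 - ∑ k, y k ^ 2 :=
          Real.sq_sqrt (by linarith)
        have hbv : b y = 1 / (1 + Real.sqrt (1 - ∑ k, y k ^ 2)) := by rw [hbdef]
        have hco : (1 - Real.sqrt (1 - ∑ k, y k ^ 2)) / (∑ k, y k ^ 2) = b y := by
          rw [hbv, div_eq_div_iff (ne_of_gt h) (ne_of_gt (hbpos y))]
          nlinarith
        rw [hco]
      · rw [if_neg h]
        have hq0' : (∑ k, y k ^ 2) = 0 := le_antisymm (not_lt.mp h) (hq0 y)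
        have hyz : y i = 0 := by
          have := (Finset.sum_eq_zero_iff_of_nonneg (fun k _ => sq_nonneg (y k))).mp hq0' i
            (Finset.mem_univ i)
          exact pow_eq_zero_iff (by norm_num) |>.mp this
        rw [hyz]
        ring
    -- constants
    set Ma : ℝ := |γ 0| + K with hMadef
    have hMann : 0 ≤ Ma := by positivity
    set cs : ℝ := Real.sqrt (1 - s) with hcsdef
    have hcs : 0 < cs := Real.sqrt_pos.mpr (by linarith)
    set C : ℝ := (K : ℝ) * n * 2 + Ma * (2 + n / cs) with hCdef
    have hC0 : 0 ≤ C := by positivity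
    refine ⟨C.toNNReal, ?_⟩
    rw [lipschitzOnWith_iff_dist_le_mul]
    intro y hy z hz
    set d : ℝ := dist y z with hddef
    have hd0 : 0 ≤ d := dist_nonneg
    have hKd : 0 ≤ (C.toNNReal : ℝ) * d := by positivity
    rw [dist_pi_le_iff hKd]
    intro i
    rw [dist_pi_le_iff hKd]
    intro j
    -- scalar bounds
    have hdist_coord : ∀ k, |y k - z k| ≤ d := by
      intro k
      rw [← Real.dist_eq]; exact dist_le_pi_dist y z k
    have hq_lip : |(∑ k, y k ^ 2) - ∑ k, z k ^ 2| ≤ 2 * n * d := by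
      rw [← Finset.sum_sub_distrib]
      calc |∑ k, (y k ^ 2 - z k ^ 2)| ≤ ∑ k, |y k ^ 2 - z k ^ 2| :=
            Finset.abs_sum_le_sum_abs _ _
        _ ≤ ∑ _k : Fin n, 2 * d := by
            apply Finset.sum_le_sum
            intro k _
            have h2 : y k ^ 2 - z k ^ 2 = (y k - z k) * (y k + z k) := by ring
            rw [h2, abs_mul]
            have h3 := hdist_coord k
            have h4 : |y k + z k| ≤ 2 := by
              have g1 := hyi y hy k; have g2 := hyi z hz k
              have g3 := abs_add_le (y k) (z k)
              linarith
            nlinarith [abs_nonneg (y k - z k), abs_nonneg (y k + z k)]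
        _ = 2 * n * d := by rw [Finset.sum_const, Finset.card_univ]; simp; ring
    -- Lipschitz bound for a via the Euclidean norm
    have hsqrt_lip : |Real.sqrt (∑ k, y k ^ 2) - Real.sqrt (∑ k, z k ^ 2)| ≤ n * d := by
      set Y : EuclideanSpace ℝ (Fin n) := (WithLp.equiv 2 (Fin n → ℝ)).symm y with hY
      set Z : EuclideanSpace ℝ (Fin n) := (WithLp.equiv 2 (Fin n → ℝ)).symm z with hZ
      have hYn : ‖Y‖ = Real.sqrt (∑ k, y k ^ 2) := by
        rw [EuclideanSpace.norm_eq]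
        congr 1
        apply Finset.sum_congr rfl
        intro k _
        rw [hY, WithLp.equiv_symm_apply, PiLp.toLp_apply, Real.norm_eq_abs, sq_abs]
      have hZn : ‖Z‖ = Real.sqrt (∑ k, z k ^ 2) := by
        rw [EuclideanSpace.norm_eq]
        congr 1
        apply Finset.sum_congr rfl
        intro k _
        rw [hZ, WithLp.equiv_symm_apply, PiLp.toLp_apply, Real.norm_eq_abs, sq_abs]
      have hYZ : ‖Y - Z‖ ≤ n * d := by
        rw [EuclideanSpace.norm_eq]
        have hsum : (∑ k, ‖(Y - Z) k‖ ^ 2) ≤ n * d ^ 2 := by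
          calc (∑ k, ‖(Y - Z) k‖ ^ 2) ≤ ∑ _k : Fin n, d ^ 2 := by
                apply Finset.sum_le_sum
                intro k _
                have h1 : (Y - Z) k = y k - z k := by
                  simp [hY, hZ, WithLp.equiv_symm_apply, PiLp.toLp_apply]
                rw [h1, Real.norm_eq_abs, sq_abs]
                have := hdist_coord k
                nlinarith [abs_nonneg (y k - z k), sq_abs (y k - z k)]
            _ = n * d ^ 2 := by rw [Finset.sum_const, Finset.card_univ]; simp
        calc Real.sqrt (∑ k, ‖(Y - Z) k‖ ^ 2) ≤ Real.sqrt ((n * d) ^ 2) := by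
              apply Real.sqrt_le_sqrt
              have hn1 : (1:ℝ) ≤ n := by exact_mod_cast hn
              nlinarith [hn', hd0, hsum]
          _ = n * d := Real.sqrt_sq (by positivity)
      calc |Real.sqrt (∑ k, y k ^ 2) - Real.sqrt (∑ k, z k ^ 2)| = |‖Y‖ - ‖Z‖| := by
            rw [hYn, hZn]
        _ ≤ ‖Y - Z‖ := abs_norm_sub_norm_le _ _
        _ ≤ n * d := hYZ
    have hγ' := lipschitzOnWith_iff_dist_le_mul.mp hγ
    have ha_lip : |a y - a z| ≤ (K : ℝ) * (n * d) := by
      have h := hγ' _ (hqIcc y hy) _ (hqIcc z hz)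
      rw [Real.dist_eq, Real.dist_eq] at h
      calc |a y - a z| ≤ (K : ℝ) * |Real.sqrt (∑ k, y k ^ 2) - Real.sqrt (∑ k, z k ^ 2)| := h
        _ ≤ (K : ℝ) * (n * d) := mul_le_mul_of_nonneg_left hsqrt_lip K.coe_nonneg
    have ha_bdd : |a z| ≤ Ma := by
      have h1 := hγ' _ (hqIcc z hz) 0 ⟨le_refl 0, zero_le_one⟩
      rw [Real.dist_eq, Real.dist_eq, sub_zero] at h1
      have h2 : |Real.sqrt (∑ k, z k ^ 2)| ≤ 1 := by
        rw [abs_of_nonneg (Real.sqrt_nonneg _)]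
        exact (hqIcc z hz).2
      have h3 := abs_sub_abs_le_abs_sub (γ (Real.sqrt (∑ k, z k ^ 2))) (γ 0)
      have : a z = γ (Real.sqrt (∑ k, z k ^ 2)) := by rw [hadef]
      rw [this, hMadef]
      nlinarith [K.coe_nonneg]
    -- Lipschitz and boundedness for b
    have hb_bdd : ∀ w ∈ S, |b w| ≤ 1 := by
      intro w _
      have h1 := hbpos w
      have h2 : b w = 1 / (1 + Real.sqrt (1 - ∑ i, w i ^ 2)) := by rw [hbdef]
      rw [h2, abs_of_nonneg (by positivity), div_le_one h1]
      have := Real.sqrt_nonneg (1 - ∑ i, w i ^ 2)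
      linarith
    have hb_lip : |b y - b z| ≤ (n / cs) * d := by
      set p : ℝ := Real.sqrt (1 - ∑ k, y k ^ 2) with hpdef
      set r : ℝ := Real.sqrt (1 - ∑ k, z k ^ 2) with hrdef
      have hp0 : 0 ≤ p := Real.sqrt_nonneg _
      have hr0 : 0 ≤ r := Real.sqrt_nonneg _
      have hpr : |p - r| ≤ |(1 - ∑ k, y k ^ 2) - (1 - ∑ k, z k ^ 2)| / (2 * cs) := by
        rw [hcsdef]
        exact aux_sqrt_lip (by linarith) (by linarith [hqS y hy]) (by linarith [hqS z hz])
      have h1 : |(1 - ∑ k, y k ^ 2) - (1 - ∑ k, z k ^ 2)| = |(∑ k, y k ^ 2) - ∑ k, z k ^ 2| := by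
        rw [show (1 - ∑ k, y k ^ 2) - (1 - ∑ k, z k ^ 2)
            = -((∑ k, y k ^ 2) - ∑ k, z k ^ 2) by ring, abs_neg]
      rw [h1] at hpr
      have h2 : b y - b z = (r - p) / ((1 + p) * (1 + r)) := by
        rw [hbdef]
        rw [div_sub_div _ _ (by positivity) (by positivity)]
        congr 1
        ring
      rw [h2, abs_div]
      have h3 : (1:ℝ) ≤ |(1 + p) * (1 + r)| := by
        rw [abs_of_nonneg (by positivity)]
        nlinarith
      calc |r - p| / |(1 + p) * (1 + r)| ≤ |r - p| := div_le_self (abs_nonneg _) h3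
        _ = |p - r| := abs_sub_comm r p
        _ ≤ |(∑ k, y k ^ 2) - ∑ k, z k ^ 2| / (2 * cs) := hpr
        _ ≤ (2 * n * d) / (2 * cs) := by gcongr
        _ = (n / cs) * d := by field_simp
    -- product bounds
    have hPy : |y i * y j| ≤ 1 := by
      rw [abs_mul]
      exact mul_le_one₀ (hyi y hy i) (abs_nonneg _) (hyi y hy j)
    have hPz : |z i * z j| ≤ 1 := by
      rw [abs_mul]
      exact mul_le_one₀ (hyi z hz i) (abs_nonneg _) (hyi z hz j)
    have hPP : |y i * y j - z i * z j| ≤ 2 * d := by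
      have e : y i * y j - z i * z j = y i * (y j - z j) + z j * (y i - z i) := by ring
      rw [e]
      calc |y i * (y j - z j) + z j * (y i - z i)|
          ≤ |y i * (y j - z j)| + |z j * (y i - z i)| := abs_add_le _ _
        _ = |y i| * |y j - z j| + |z j| * |y i - z i| := by rw [abs_mul, abs_mul]
        _ ≤ 1 * d + 1 * d := by
            gcongr
            · exact hyi y hy i
            · exact hdist_coord j
            · exact hyi z hz j
            · exact hdist_coord i
        _ = 2 * d := by ring
    -- the entrywise estimate
    rw [Real.dist_eq, hFS y hy i j, hFS z hz i j]
    set δij : ℝ := if i = j then 1 else 0 with hδij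
    have hδ1 : |δij| ≤ 1 := by
      rw [hδij]; split <;> norm_num
    have hδBP : |δij - b y * (y i * y j)| ≤ 2 := by
      calc |δij - b y * (y i * y j)| ≤ |δij| + |b y * (y i * y j)| := abs_sub _ _
        _ ≤ 1 + |b y| * |y i * y j| := by rw [abs_mul]; linarith
        _ ≤ 1 + 1 * 1 := by
            have h1 := hb_bdd y hy
            have h2 := abs_nonneg (b y)
            nlinarith
        _ = 2 := by ring
    have hBP : |b z * (z i * z j) - b y * (y i * y j)| ≤ 2 * d + (n / cs) * d := by
      have e : b z * (z i * z j) - b y * (y i * y j)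
          = b z * ((z i * z j) - (y i * y j)) + (y i * y j) * (b z - b y) := by ring
      rw [e]
      calc |b z * ((z i * z j) - (y i * y j)) + (y i * y j) * (b z - b y)|
          ≤ |b z| * |(z i * z j) - (y i * y j)| + |y i * y j| * |b z - b y| := by
            refine (abs_add_le _ _).trans ?_
            rw [abs_mul, abs_mul]
        _ ≤ 1 * (2 * d) + 1 * ((n / cs) * d) := by
            have t1 : |b z| * |(z i * z j) - (y i * y j)| ≤ 1 * (2 * d) :=
              mul_le_mul (hb_bdd z hz) (by rw [abs_sub_comm]; exact hPP) (abs_nonneg _)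
                one_pos.le
            have t2 : |y i * y j| * |b z - b y| ≤ 1 * ((n / cs) * d) :=
              mul_le_mul hPy (by rw [abs_sub_comm]; exact hb_lip) (abs_nonneg _) one_pos.le
            linarith
        _ = 2 * d + (n / cs) * d := by ring
    have key : |a y * (δij - b y * (y i * y j)) - a z * (δij - b z * (z i * z j))|
        ≤ C * d := by
      have e : a y * (δij - b y * (y i * y j)) - a z * (δij - b z * (z i * z j))
          = (a y - a z) * (δij - b y * (y i * y j))
            + a z * (b z * (z i * z j) - b y * (y i * y j)) := by ring
      rw [e]
      calc |(a y - a z) * (δij - b y * (y i * y j))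
            + a z * (b z * (z i * z j) - b y * (y i * y j))|
          ≤ |a y - a z| * |δij - b y * (y i * y j)|
            + |a z| * |b z * (z i * z j) - b y * (y i * y j)| := by
            refine (abs_add_le _ _).trans ?_
            rw [abs_mul, abs_mul]
        _ ≤ ((K : ℝ) * (n * d)) * 2 + Ma * (2 * d + (n / cs) * d) := by
            have t1 : |a y - a z| * |δij - b y * (y i * y j)| ≤ ((K : ℝ) * (n * d)) * 2 :=
              mul_le_mul ha_lip hδBP (abs_nonneg _) (by positivity)
            have t2 : |a z| * |b z * (z i * z j) - b y * (y i * y j)|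
                ≤ Ma * (2 * d + (n / cs) * d) :=
              mul_le_mul ha_bdd hBP (abs_nonneg _) hMann
            linarith
        _ = C * d := by rw [hCdef]; ring
    calc |a y * (δij - b y * (y i * y j)) - a z * (δij - b z * (z i * z j))| ≤ C * d := key
      _ ≤ (C.toNNReal : ℝ) * d := mul_le_mul_of_nonneg_right (Real.le_coe_toNNReal C) hd0
  · -- Part 2: σ is not Lipschitz on the closed unit ball
    rintro ⟨K', hK⟩
    rw [lipschitzOnWith_iff_dist_le_mul] at hK
    set C : ℝ := (K' : ℝ) with hC
    have hC0 : 0 ≤ C := K'.coe_nonneg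
    set δ : ℝ := 1 / (C + 2) ^ 2 with hδ
    have hC2 : (0:ℝ) < C + 2 := by linarith
    have hδ0 : 0 < δ := by positivity
    have hδ1 : δ ≤ 1 / 4 := by
      rw [hδ, div_le_div_iff₀ (by positivity) (by norm_num)]
      nlinarith
    set t : ℝ := 1 - δ with ht
    have ht0 : 0 < t := by rw [ht]; linarith
    have ht1 : t < 1 := by rw [ht]; linarith
    set i0 : Fin n := ⟨0, hn⟩ with hi0
    set xt : Fin n → ℝ := fun i => if i = i0 then t else 0 with hxt
    set x1 : Fin n → ℝ := fun i => if i = i0 then 1 else 0 with hx1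
    have hsum : ∀ c : ℝ, (∑ i, (if i = i0 then c else 0) ^ 2) = c ^ 2 := by
      intro c
      rw [Finset.sum_eq_single i0] <;> simp (config := {contextual := true})
    have hqt : (∑ i, xt i ^ 2) = t ^ 2 := hsum t
    have hq1 : (∑ i, x1 i ^ 2) = 1 ^ 2 := hsum 1
    have hmt : xt ∈ {y : Fin n → ℝ | ∑ i, y i ^ 2 ≤ 1} := by
      simp only [Set.mem_setOf_eq, hqt]; nlinarith
    have hm1 : x1 ∈ {y : Fin n → ℝ | ∑ i, y i ^ 2 ≤ 1} := by
      simp only [Set.mem_setOf_eq, hq1]; norm_num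
    have hdist : dist xt x1 ≤ δ := by
      rw [dist_pi_le_iff hδ0.le]
      intro i
      by_cases h : i = i0
      · have e1 : xt i = t := by rw [hxt]; simp [h]
        have e2 : x1 i = 1 := by rw [hx1]; simp [h]
        rw [e1, e2, Real.dist_eq, ht]
        rw [show (1 - δ) - 1 = -δ by ring, abs_neg, abs_of_nonneg hδ0.le]
      · have e1 : xt i = 0 := by rw [hxt]; simp [h]
        have e2 : x1 i = 0 := by rw [hx1]; simp [h]
        rw [e1, e2, dist_self]
        exact hδ0.le
    have hσt : σ xt i0 i0 = Real.sqrt (1 - t ^ 2) := by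
      rw [hσe xt i0 i0, hqt, if_pos rfl, if_pos (by positivity)]
      have hxtv : xt i0 = t := by rw [hxt]; simp
      rw [hxtv, show t * t = t ^ 2 by ring,
        div_mul_cancel₀ _ (by positivity : (t:ℝ)^2 ≠ 0)]
      ring
    have hσ1 : σ x1 i0 i0 = 0 := by
      rw [hσe x1 i0 i0, hq1, if_pos rfl, if_pos (by norm_num)]
      have hxv : x1 i0 = 1 := by rw [hx1]; simp
      rw [hxv]
      simp
    have hlow : Real.sqrt (1 - t ^ 2) ≤ dist (σ xt) (σ x1) := by
      calc Real.sqrt (1 - t ^ 2) = dist (σ xt i0 i0) (σ x1 i0 i0) := by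
            rw [hσt, hσ1, Real.dist_eq, sub_zero, abs_of_nonneg (Real.sqrt_nonneg _)]
        _ ≤ dist (σ xt i0) (σ x1 i0) := dist_le_pi_dist _ _ _
        _ ≤ dist (σ xt) (σ x1) := dist_le_pi_dist _ _ _
    have hup : dist (σ xt) (σ x1) ≤ C * δ := by
      calc dist (σ xt) (σ x1) ≤ C * dist xt x1 := hK xt hmt x1 hm1
        _ ≤ C * δ := mul_le_mul_of_nonneg_left hdist hC0
    have hsd : Real.sqrt δ ≤ Real.sqrt (1 - t ^ 2) := by
      apply Real.sqrt_le_sqrt; nlinarith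
    have hsdv : Real.sqrt δ = 1 / (C + 2) := by
      rw [hδ, one_div, one_div, Real.sqrt_inv, Real.sqrt_sq hC2.le]
    have hfinal : 1 / (C + 2) ≤ C * δ := by
      rw [← hsdv]
      linarith
    rw [hδ] at hfinal
    have h2 : C * (1 / (C + 2) ^ 2) = C / (C + 2) ^ 2 := by ring
    rw [h2, le_div_iff₀ (by positivity)] at hfinal
    have h3 : 1 / (C + 2) * (C + 2) ^ 2 = C + 2 := by
      field_simp
    rw [h3] at hfinal
    linarith
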